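/- If a positive-definite operator-valued kernel K on the free monoid F_d^+ admits a Kolmogorov factorization K(α,β) = V_α* V_β with maps V_α : H → H', and K_Σ ≤ K in the positive-definite order (i.e., K − K_Σ is positive definite, where K_Σ(α,β) = ∑_i K(αi,βi)), then the maps B_i defined on span{V_α u} by B_i(V_α u) = V_{αi} u are well defined and extend to bounded operators on the closure of the span with ∑_{i=1}^d B_i* B_i ≤ I. -/

import Mathlib

open scoped ComplexInnerProductSpace

noncomputable def opKernel {H H' : Type*}
    [NormedAddCommGroup H] [InnerProductSpace ℂ H] [CompleteSpace H]
    [NormedAddCommGroup H'] [InnerProductSpace ℂ H'] [CompleteSpace H']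
    {d : ℕ} (V : List (Fin d) → H →L[ℂ] H') (α β : List (Fin d)) : H →L[ℂ] H :=
  (ContinuousLinearMap.adjoint (V α)) ∘L (V β)

section Aux

variable {H H' : Type*}
    [NormedAddCommGroup H] [InnerProductSpace ℂ H] [CompleteSpace H]
    [NormedAddCommGroup H'] [InnerProductSpace ℂ H'] [CompleteSpace H']
    {d : ℕ}

/-- The linear combination map sending a formal combination of pairs `(α, u)` to
`∑ c (α,u) • V α u`. -/
noncomputable def kolPi (V : List (Fin d) → H →L[ℂ] H') :
    ((List (Fin d) × H) →₀ ℂ) →ₗ[ℂ] H' :=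
  Finsupp.linearCombination ℂ (fun p => V p.1 p.2)

/-- The shifted linear combination map sending a formal combination to
`∑ c (α,u) • V (α ++ [i]) u`. -/
noncomputable def kolTau (V : List (Fin d) → H →L[ℂ] H') (i : Fin d) :
    ((List (Fin d) × H) →₀ ℂ) →ₗ[ℂ] H' :=
  Finsupp.linearCombination ℂ (fun p => V (p.1 ++ [i]) p.2)

omit [CompleteSpace H] [CompleteSpace H'] in
lemma kolPi_range (V : List (Fin d) → H →L[ℂ] H') :
    LinearMap.range (kolPi V) = Submodule.span ℂ (⋃ α, Set.range (V α)) := by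
  rw [kolPi, Finsupp.range_linearCombination]
  congr 1
  ext x
  simp [Set.mem_iUnion, Prod.exists]

/-- Key inequality, derived from positive definiteness of `K - K_Σ`. -/
lemma kolKey (V : List (Fin d) → H →L[ℂ] H')
    (hpd : ∀ {N : ℕ} (α : Fin N → List (Fin d)) (u : Fin N → H),
      0 ≤ (∑ j, ∑ k, (⟪u j, opKernel V (α j) (α k) (u k)⟫
        - ∑ i, ⟪u j, opKernel V (α j ++ [i]) (α k ++ [i]) (u k)⟫)).re)
    (f : (List (Fin d) × H) →₀ ℂ) :
    ∑ i, ‖kolTau V i f‖ ^ 2 ≤ ‖kolPi V f‖ ^ 2 := by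
  classical
  set s := f.support with hs
  set N := s.card with hN
  set e : Fin N ≃ {x // x ∈ s} := s.equivFin.symm with he
  set α : Fin N → List (Fin d) := fun j => ((e j : List (Fin d) × H)).1 with hα
  set u : Fin N → H := fun j => f (e j) • ((e j : List (Fin d) × H)).2 with hu
  have hπ : kolPi V f = ∑ j, V (α j) (u j) := by
    rw [kolPi, Finsupp.linearCombination_apply, Finsupp.sum, ← hs,
      ← Finset.sum_coe_sort s, ← Equiv.sum_comp e]
    refine Finset.sum_congr rfl fun j _ => ?_
    simp [hα, hu, map_smul]
  have hτ : ∀ i, kolTau V i f = ∑ j, V (α j ++ [i]) (u j) := by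
    intro i
    rw [kolTau, Finsupp.linearCombination_apply, Finsupp.sum, ← hs,
      ← Finset.sum_coe_sort s, ← Equiv.sum_comp e]
    refine Finset.sum_congr rfl fun j _ => ?_
    simp [hα, hu, map_smul]
  have key := hpd α u
  have hker : ∀ (a b : List (Fin d)) (x y : H),
      ⟪x, opKernel V a b y⟫ = ⟪V a x, V b y⟫ := by
    intro a b x y
    simp only [opKernel, ContinuousLinearMap.coe_comp', Function.comp_apply]
    exact ContinuousLinearMap.adjoint_inner_right (V a) x (V b y)
  have hsum : ∀ (β : Fin N → List (Fin d)),
      ∑ j, ∑ k, ⟪V (β j) (u j), V (β k) (u k)⟫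
        = ⟪∑ j, V (β j) (u j), ∑ k, V (β k) (u k)⟫ := by
    intro β
    rw [sum_inner]
    exact Finset.sum_congr rfl fun j _ => (inner_sum _ _ _).symm
  have hexpr : (∑ j, ∑ k, (⟪u j, opKernel V (α j) (α k) (u k)⟫
        - ∑ i, ⟪u j, opKernel V (α j ++ [i]) (α k ++ [i]) (u k)⟫))
      = ⟪kolPi V f, kolPi V f⟫ - ∑ i, ⟪kolTau V i f, kolTau V i f⟫ := by
    have h1 : ∀ j k, ⟪u j, opKernel V (α j) (α k) (u k)⟫
        = ⟪V (α j) (u j), V (α k) (u k)⟫ := fun j k => hker _ _ _ _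
    have h2 : ∀ i j k, ⟪u j, opKernel V (α j ++ [i]) (α k ++ [i]) (u k)⟫
        = ⟪V (α j ++ [i]) (u j), V (α k ++ [i]) (u k)⟫ := fun i j k => hker _ _ _ _
    simp only [h1, h2, Finset.sum_sub_distrib]
    rw [hsum α, hπ]
    congr 1
    calc ∑ j, ∑ k, ∑ i, ⟪V (α j ++ [i]) (u j), V (α k ++ [i]) (u k)⟫
        = ∑ j, ∑ i, ∑ k, ⟪V (α j ++ [i]) (u j), V (α k ++ [i]) (u k)⟫ :=
          Finset.sum_congr rfl fun j _ => Finset.sum_comm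
      _ = ∑ i, ∑ j, ∑ k, ⟪V (α j ++ [i]) (u j), V (α k ++ [i]) (u k)⟫ :=
          Finset.sum_comm
      _ = ∑ i, ⟪kolTau V i f, kolTau V i f⟫ := by
          refine Finset.sum_congr rfl fun i _ => ?_
          rw [hsum (fun j => α j ++ [i]), hτ i]
  rw [hexpr] at key
  have : (⟪kolPi V f, kolPi V f⟫ - ∑ i, ⟪kolTau V i f, kolTau V i f⟫).re
      = ‖kolPi V f‖ ^ 2 - ∑ i, ‖kolTau V i f‖ ^ 2 := by
    rw [Complex.sub_re]
    congr 1
    · exact inner_self_eq_norm_sq (𝕜 := ℂ) _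
    · rw [Complex.re_sum]
      exact Finset.sum_congr rfl fun i _ => inner_self_eq_norm_sq (𝕜 := ℂ) _
  rw [this] at key
  linarith

end Aux

/-- if the p.d. kernel `K(α,β) = V_α* V_β` satisfies `K_Σ ≤ K`
(`K − K_Σ` is positive definite), then the maps `B_i (V_α u) = V_{αi} u` are well
defined and extend to bounded operators with `∑ᵢ Bᵢ* Bᵢ ≤ I`. -/
theorem kolmogorov_row_contraction
    {H H' : Type*}
    [NormedAddCommGroup H] [InnerProductSpace ℂ H] [CompleteSpace H]
    [NormedAddCommGroup H'] [InnerProductSpace ℂ H'] [CompleteSpace H']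
    {d : ℕ} (V : List (Fin d) → H →L[ℂ] H')
    (hdense : Dense (↑(Submodule.span ℂ (⋃ α, Set.range (V α))) : Set H'))
    (hpd : ∀ {N : ℕ} (α : Fin N → List (Fin d)) (u : Fin N → H),
      0 ≤ (∑ j, ∑ k, (⟪u j, opKernel V (α j) (α k) (u k)⟫
        - ∑ i, ⟪u j, opKernel V (α j ++ [i]) (α k ++ [i]) (u k)⟫)).re) :
    ∃ B : Fin d → H' →L[ℂ] H',
      (∀ i (α : List (Fin d)) (u : H), B i (V α u) = V (α ++ [i]) u) ∧
      ((1 : H' →L[ℂ] H') -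
        ∑ i, (ContinuousLinearMap.adjoint (B i)) ∘L (B i)).IsPositive := by
  classical
  set π := kolPi V with hπdef
  set R : Submodule ℂ H' := LinearMap.range π with hR
  have hkey := kolKey V hpd
  -- each τ i vanishes on ker π
  have hker : ∀ i, LinearMap.ker π ≤ LinearMap.ker (kolTau V i) := by
    intro i f hf
    have h0 : ∑ i', ‖kolTau V i' f‖ ^ 2 ≤ 0 := by
      have := hkey f
      rw [LinearMap.mem_ker.mp hf] at this
      simpa using this
    have hterm : ‖kolTau V i f‖ ^ 2 ≤ 0 := by
      have hnn : ∀ i' ∈ Finset.univ, (0:ℝ) ≤ ‖kolTau V i' f‖ ^ 2 :=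
        fun i' _ => sq_nonneg _
      calc ‖kolTau V i f‖ ^ 2 ≤ ∑ i', ‖kolTau V i' f‖ ^ 2 :=
            Finset.single_le_sum hnn (Finset.mem_univ i)
        _ ≤ 0 := h0
    have : ‖kolTau V i f‖ = 0 := by nlinarith [norm_nonneg (kolTau V i f)]
    exact LinearMap.mem_ker.mpr (norm_eq_zero.mp this)
  -- linear maps on the range of π
  set qe := LinearMap.quotKerEquivRange π with hqe
  set B₀ : Fin d → (R →ₗ[ℂ] H') := fun i =>
    (Submodule.liftQ (LinearMap.ker π) (kolTau V i) (hker i)) ∘ₗ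
      (qe.symm : R →ₗ[ℂ] _) with hB₀
  have hB₀app : ∀ i (f : (List (Fin d) × H) →₀ ℂ) (hf : π f ∈ R),
      B₀ i ⟨π f, hf⟩ = kolTau V i f := by
    intro i f hf
    have h1 : qe (Submodule.Quotient.mk f) = ⟨π f, hf⟩ := by
      apply Subtype.ext
      simp [hqe, LinearMap.quotKerEquivRange]
    have h2 : qe.symm ⟨π f, hf⟩ = Submodule.Quotient.mk f := by
      rw [← h1, LinearEquiv.symm_apply_apply]
    simp only [hB₀, LinearMap.comp_apply, LinearEquiv.coe_coe, h2]
    exact Submodule.liftQ_apply _ _ _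
  -- norm bound for B₀
  have hB₀norm : ∀ i (x : R), ‖B₀ i x‖ ≤ 1 * ‖x‖ := by
    intro i x
    obtain ⟨f, hf⟩ := x.2
    have hx : x = ⟨π f, by rw [hf]; exact x.2⟩ := by
      apply Subtype.ext; exact hf.symm
    rw [hx, hB₀app i f _]
    have h1 : ‖kolTau V i f‖ ^ 2 ≤ ‖π f‖ ^ 2 := by
      have hnn : ∀ i' ∈ Finset.univ, (0:ℝ) ≤ ‖kolTau V i' f‖ ^ 2 :=
        fun i' _ => sq_nonneg _
      calc ‖kolTau V i f‖ ^ 2 ≤ ∑ i', ‖kolTau V i' f‖ ^ 2 :=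
            Finset.single_le_sum hnn (Finset.mem_univ i)
        _ ≤ ‖π f‖ ^ 2 := hkey f
    have h2 : ‖(⟨π f, by rw [hf]; exact x.2⟩ : R)‖ = ‖π f‖ := rfl
    rw [h2, one_mul]
    nlinarith [norm_nonneg (kolTau V i f), norm_nonneg (π f)]
  set B₀c : Fin d → (R →L[ℂ] H') := fun i =>
    LinearMap.mkContinuous (B₀ i) 1 (hB₀norm i) with hB₀c
  -- dense isometric inclusion
  set e : R →L[ℂ] H' := R.subtypeL with hedef
  have hrange : (R : Set H') = ↑(Submodule.span ℂ (⋃ α, Set.range (V α))) := by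
    rw [hR, kolPi_range V]
  have hdr : DenseRange e := by
    have : Set.range e = (R : Set H') := Subtype.range_coe
    rw [DenseRange, this, hrange]
    exact hdense
  have hui : IsUniformInducing e := isometry_subtype_coe.isUniformInducing
  set B : Fin d → (H' →L[ℂ] H') := fun i => (B₀c i).extend e with hBdef
  have hBe : ∀ i (x : R), B i (e x) = B₀c i x := fun i x =>
    ContinuousLinearMap.extend_eq _ hdr hui _
  -- property 1
  have hprop : ∀ i (α : List (Fin d)) (u : H), B i (V α u) = V (α ++ [i]) u := by
    intro i α u
    set f : (List (Fin d) × H) →₀ ℂ := Finsupp.single (α, u) 1 with hf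
    have hπf : π f = V α u := by
      simp [hf, hπdef, kolPi, Finsupp.linearCombination_single]
    have hτf : kolTau V i f = V (α ++ [i]) u := by
      simp [hf, kolTau, Finsupp.linearCombination_single]
    have hmem : V α u ∈ R := by rw [← hπf]; exact LinearMap.mem_range_self π f
    have : V α u = e ⟨V α u, hmem⟩ := rfl
    rw [this, hBe i]
    have : B₀c i ⟨V α u, hmem⟩ = B₀ i ⟨V α u, hmem⟩ := rfl
    rw [this]
    have hx : (⟨V α u, hmem⟩ : R) = ⟨π f, by rw [hπf]; exact hmem⟩ := by
      apply Subtype.ext; exact hπf.symm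
    rw [hx, hB₀app i f _, hτf]
  refine ⟨B, hprop, ?_⟩
  -- positivity
  have hbound : ∀ x : H', ∑ i, ‖B i x‖ ^ 2 ≤ ‖x‖ ^ 2 := by
    intro x
    have hclosed : IsClosed {y : H' | ∑ i, ‖B i y‖ ^ 2 ≤ ‖y‖ ^ 2} := by
      apply isClosed_le
      · exact continuous_finset_sum _ fun i _ =>
          ((B i).continuous.norm).pow 2
      · exact continuous_norm.pow 2
    have hsub : (R : Set H') ⊆ {y : H' | ∑ i, ‖B i y‖ ^ 2 ≤ ‖y‖ ^ 2} := by
      intro y hy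
      obtain ⟨f, hf⟩ := hy
      have hy' : y = e ⟨π f, LinearMap.mem_range_self π f⟩ := by
        simp [hedef, hf]
      have hBy : ∀ i, B i y = kolTau V i f := by
        intro i
        rw [hy', hBe i]
        have : B₀c i ⟨π f, LinearMap.mem_range_self π f⟩
            = B₀ i ⟨π f, LinearMap.mem_range_self π f⟩ := rfl
        rw [this, hB₀app i f _]
      simp only [Set.mem_setOf_eq, hBy]
      rw [← hf]
      exact hkey f
    have hdense' : Dense (R : Set H') := by rw [hrange]; exact hdense
    have : closure (R : Set H') ⊆ {y : H' | ∑ i, ‖B i y‖ ^ 2 ≤ ‖y‖ ^ 2} :=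
      closure_minimal hsub hclosed
    rw [hdense'.closure_eq] at this
    exact this (Set.mem_univ x)
  rw [ContinuousLinearMap.isPositive_def']
  constructor
  · -- self-adjoint
    rw [IsSelfAdjoint, star_sub, star_one, star_sum]
    congr 1
    refine Finset.sum_congr rfl fun i _ => ?_
    have : (ContinuousLinearMap.adjoint (B i)) ∘L (B i)
        = (ContinuousLinearMap.adjoint (B i)) * (B i) := rfl
    rw [this, star_mul, ContinuousLinearMap.star_eq_adjoint,
      ContinuousLinearMap.star_eq_adjoint, ContinuousLinearMap.adjoint_adjoint]
  · -- nonnegativity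
    intro x
    have hre : ((1 : H' →L[ℂ] H') -
        ∑ i, (ContinuousLinearMap.adjoint (B i)) ∘L (B i)).reApplyInnerSelf x
        = ‖x‖ ^ 2 - ∑ i, ‖B i x‖ ^ 2 := by
      rw [ContinuousLinearMap.reApplyInnerSelf_apply]
      simp only [ContinuousLinearMap.sub_apply, ContinuousLinearMap.one_apply,
        ContinuousLinearMap.sum_apply, ContinuousLinearMap.coe_comp',
        Function.comp_apply]
      rw [inner_sub_left, sum_inner, map_sub, map_sum]
      congr 1
      · exact inner_self_eq_norm_sq (𝕜 := ℂ) x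
      · refine Finset.sum_congr rfl fun i _ => ?_
        rw [ContinuousLinearMap.adjoint_inner_left]
        exact inner_self_eq_norm_sq (𝕜 := ℂ) _
    rw [hre]
    have := hbound x
    linarith
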